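/- Let m be a positive integer and let X_1, …, X_m be independent random variables on a probability space with values in [0,1] almost surely and common mean μ = E[X_i]. Then for every x > 0, P(∃ n ∈ {1,…,m} such that Σ_{i=1}^n (μ − X_i) ≥ x) ≤ exp(−2x²/m), and likewise P(∃ n ∈ {1,…,m} such that Σ_{i=1}^n (X_i − μ) ≥ x) ≤ exp(−2x²/m). -/

import Mathlib

open MeasureTheory ProbabilityTheory

section Aux

open Real

lemma hoeffding_scalar {p : ℝ} (hp0 : 0 ≤ p) (hp1 : p ≤ 1) (t : ℝ) :
    1 - p + p * Real.exp t ≤ Real.exp (p * t + t ^ 2 / 8) := by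
  have hD : ∀ s : ℝ, 0 < 1 - p + p * Real.exp s := by
    intro s
    nlinarith [Real.exp_pos s, mul_nonneg hp0 (Real.exp_pos s).le]
  set F : ℝ → ℝ := fun s => p * s + s ^ 2 / 8 - Real.log (1 - p + p * Real.exp s) with hFdef
  set G : ℝ → ℝ := fun s => p + s / 4 - p * Real.exp s / (1 - p + p * Real.exp s) with hGdef
  have hF : ∀ s : ℝ, HasDerivAt F (G s) s := by
    intro s
    have h1 : HasDerivAt (fun s => 1 - p + p * Real.exp s) (p * Real.exp s) s := by
      simpa using ((Real.hasDerivAt_exp s).const_mul p).const_add (1 - p)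
    have h2 := h1.log (hD s).ne'
    have h3 : HasDerivAt (fun s : ℝ => p * s) p s := by
      simpa using (hasDerivAt_id s).const_mul p
    have h4 : HasDerivAt (fun s : ℝ => s ^ 2 / 8) (2 * s / 8) s := by
      simpa using (hasDerivAt_pow 2 s).div_const 8
    have h5 := (h3.add h4).sub h2
    refine h5.congr_deriv ?_
    ring
  have hG : ∀ s : ℝ, HasDerivAt G (1 / 4 - p * (1 - p) * Real.exp s / (1 - p + p * Real.exp s) ^ 2) s := by
    intro s
    have h1 : HasDerivAt (fun s => 1 - p + p * Real.exp s) (p * Real.exp s) s := by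
      simpa using ((Real.hasDerivAt_exp s).const_mul p).const_add (1 - p)
    have hnum : HasDerivAt (fun s => p * Real.exp s) (p * Real.exp s) s :=
      (Real.hasDerivAt_exp s).const_mul p
    have hq := hnum.div h1 (hD s).ne'
    have hlin : HasDerivAt (fun s : ℝ => p + s / 4) (1 / 4) s := by
      simpa using ((hasDerivAt_id s).div_const 4).const_add p
    have h5 := hlin.sub hq
    refine h5.congr_deriv ?_
    field_simp
    ring
  have hGnonneg : ∀ s : ℝ, (0:ℝ) ≤ 1 / 4 - p * (1 - p) * Real.exp s / (1 - p + p * Real.exp s) ^ 2 := by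
    intro s
    have hpos : (0:ℝ) < (1 - p + p * Real.exp s) ^ 2 := pow_pos (hD s) 2
    have : p * (1 - p) * Real.exp s / (1 - p + p * Real.exp s) ^ 2 ≤ 1 / 4 := by
      rw [div_le_iff₀ hpos]
      nlinarith [sq_nonneg (1 - p - p * Real.exp s)]
    linarith
  have hGdiff : Differentiable ℝ G := fun s => (hG s).differentiableAt
  have hGmono : Monotone G := by
    refine monotone_of_deriv_nonneg hGdiff ?_
    intro s
    rw [(hG s).deriv]
    exact hGnonneg s
  have hG0 : G 0 = 0 := by
    simp only [hGdef, Real.exp_zero, mul_one]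
    have : 1 - p + p = 1 := by ring
    rw [this]
    simp
  have hF0 : F 0 = 0 := by
    simp [hFdef, Real.exp_zero]
  have hFnonneg : 0 ≤ F t := by
    rcases le_total 0 t with ht | ht
    · have hmono : MonotoneOn F (Set.Ici (0:ℝ)) := by
        refine monotoneOn_of_deriv_nonneg (convex_Ici 0)
          (fun s _ => (hF s).continuousAt.continuousWithinAt)
          (fun s _ => (hF s).differentiableAt.differentiableWithinAt) ?_
        intro s hs
        rw [(hF s).deriv]
        rw [interior_Ici] at hs
        have := hGmono (le_of_lt hs)
        rw [hG0] at this
        exact this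
      have := hmono (Set.self_mem_Ici) (Set.mem_Ici.2 ht) ht
      rwa [hF0] at this
    · have hanti : AntitoneOn F (Set.Iic (0:ℝ)) := by
        refine antitoneOn_of_deriv_nonpos (convex_Iic 0)
          (fun s _ => (hF s).continuousAt.continuousWithinAt)
          (fun s _ => (hF s).differentiableAt.differentiableWithinAt) ?_
        intro s hs
        rw [(hF s).deriv]
        rw [interior_Iic] at hs
        have := hGmono (le_of_lt hs)
        rw [hG0] at this
        exact this
      have := hanti (Set.mem_Iic.2 ht) (Set.self_mem_Iic) ht
      rwa [hF0] at this
  have hlog : Real.log (1 - p + p * Real.exp t) ≤ p * t + t ^ 2 / 8 := by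
    have h := hFnonneg
    simp only [hFdef] at h
    linarith
  exact (Real.log_le_iff_le_exp (hD t)).1 hlog

/-- helper: integrability of a.e.-bounded measurable functions -/
lemma integrable_of_ae_bound {Ω : Type*} [MeasurableSpace Ω] {P : Measure Ω}
    [IsFiniteMeasure P] {f : Ω → ℝ} {C : ℝ} (hf : Measurable f)
    (hb : ∀ᵐ ω ∂P, |f ω| ≤ C) : Integrable f P :=
  Integrable.mono' (integrable_const C) hf.aestronglyMeasurable
    (by simpa [Real.norm_eq_abs] using hb)

lemma mgf_step_bound {Ω : Type*} [MeasurableSpace Ω] (P : Measure Ω)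
    [IsProbabilityMeasure P] (Y : Ω → ℝ) (hY : Measurable Y) (c : ℝ)
    (hae : ∀ᵐ ω ∂P, Y ω ∈ Set.Icc c (c + 1)) (h0 : ∫ ω, Y ω ∂P = 0) (t : ℝ) :
    ∫ ω, Real.exp (t * Y ω) ∂P ≤ Real.exp (t ^ 2 / 8) := by
  have hYb : ∀ᵐ ω ∂P, |Y ω| ≤ |c| + 1 := by
    filter_upwards [hae] with ω h
    rw [abs_le]
    constructor
    · have := h.1; have := neg_abs_le c; linarith
    · have := h.2; have := le_abs_self c; linarith
  have hYint : Integrable Y P := integrable_of_ae_bound hY hYb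
  set p : ℝ := -c with hp
  have hZint : Integrable (fun ω => Y ω - c) P := hYint.sub (integrable_const c)
  have hZval : ∫ ω, (Y ω - c) ∂P = p := by
    rw [integral_sub hYint (integrable_const c), h0, integral_const]
    simp [hp]
  have hp0 : 0 ≤ p := by
    rw [← hZval]
    refine integral_nonneg_of_ae ?_
    filter_upwards [hae] with ω h
    simp only [Pi.zero_apply]
    linarith [h.1]
  have hp1 : p ≤ 1 := by
    rw [← hZval]
    calc ∫ ω, (Y ω - c) ∂P ≤ ∫ _ω, (1:ℝ) ∂P := by
          refine integral_mono_ae hZint (integrable_const 1) ?_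
          filter_upwards [hae] with ω h
          linarith [h.2]
      _ = 1 := by simp
  -- pointwise bound : exp (t * Y ω) ≤ K1 + K2 * Y ω
  set K2 : ℝ := Real.exp (t * c) * (Real.exp t - 1) with hK2
  set K1 : ℝ := Real.exp (t * c) * (1 - c * (Real.exp t - 1)) with hK1
  have hpt : ∀ᵐ ω ∂P, Real.exp (t * Y ω) ≤ K1 + K2 * Y ω := by
    filter_upwards [hae] with ω h
    set z : ℝ := Y ω - c with hz
    have hz0 : 0 ≤ z := by simp only [hz]; linarith [h.1]
    have hz1 : z ≤ 1 := by simp only [hz]; linarith [h.2]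
    have hconv := convexOn_exp.2 (Set.mem_univ (0:ℝ)) (Set.mem_univ t)
      (by linarith : (0:ℝ) ≤ 1 - z) hz0 (by ring)
    simp only [smul_eq_mul, mul_zero, zero_add, Real.exp_zero, mul_one] at hconv
    -- hconv : Real.exp (z * t) ≤ (1 - z) + z * Real.exp t
    have hsplit : Real.exp (t * Y ω) = Real.exp (t * c) * Real.exp (z * t) := by
      rw [← Real.exp_add]; congr 1; simp only [hz]; ring
    rw [hsplit]
    have hec : 0 < Real.exp (t * c) := Real.exp_pos _
    calc Real.exp (t * c) * Real.exp (z * t)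
        ≤ Real.exp (t * c) * ((1 - z) + z * Real.exp t) := by
          exact mul_le_mul_of_nonneg_left hconv hec.le
      _ = K1 + K2 * Y ω := by simp only [hK1, hK2, hz]; ring
  have hexpint : Integrable (fun ω => Real.exp (t * Y ω)) P := by
    refine integrable_of_ae_bound (C := Real.exp (|t| * (|c| + 1))) ((hY.const_mul t).exp) ?_
    filter_upwards [hYb] with ω h
    rw [abs_of_pos (Real.exp_pos _)]
    calc Real.exp (t * Y ω) ≤ Real.exp (|t * Y ω|) := Real.exp_le_exp.2 (le_abs_self _)
      _ ≤ Real.exp (|t| * (|c| + 1)) := by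
          rw [Real.exp_le_exp, abs_mul]
          exact mul_le_mul_of_nonneg_left h (abs_nonneg t)
  have hmono : ∫ ω, Real.exp (t * Y ω) ∂P ≤ ∫ ω, (K1 + K2 * Y ω) ∂P := by
    refine integral_mono_ae hexpint ((integrable_const K1).add (hYint.const_mul K2)) hpt
  have hval : ∫ ω, (K1 + K2 * Y ω) ∂P = K1 := by
    rw [integral_add (integrable_const K1) (hYint.const_mul K2), integral_const,
      integral_const_mul, h0]
    simp
  have hfin : K1 ≤ Real.exp (t ^ 2 / 8) := by
    have hkey := hoeffding_scalar hp0 hp1 t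
    have hec : 0 < Real.exp (t * c) := Real.exp_pos _
    have : K1 = Real.exp (t * c) * (1 - p + p * Real.exp t) := by
      simp only [hK1, hp]; ring
    rw [this]
    calc Real.exp (t * c) * (1 - p + p * Real.exp t)
        ≤ Real.exp (t * c) * Real.exp (p * t + t ^ 2 / 8) :=
          mul_le_mul_of_nonneg_left hkey hec.le
      _ = Real.exp (t * c + (p * t + t ^ 2 / 8)) := (Real.exp_add _ _).symm
      _ = Real.exp (t ^ 2 / 8) := by congr 1; simp only [hp]; ring
  linarith

lemma maximal_key {Ω : Type*} [MeasurableSpace Ω] (P : Measure Ω) [IsProbabilityMeasure P]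
    (m : ℕ) (hm : 0 < m) (Y : ℕ → Ω → ℝ) (hYmeas : ∀ i, Measurable (Y i))
    (hindep : iIndepFun (fun i : Fin m => Y (i : ℕ)) P)
    (c : ℕ → ℝ) (hbdd : ∀ i < m, ∀ᵐ ω ∂P, Y i ω ∈ Set.Icc (c i) (c i + 1))
    (hmean : ∀ i < m, ∫ ω, Y i ω ∂P = 0)
    (x : ℝ) (hx : 0 < x) :
    P {ω | ∃ n ∈ Finset.Icc 1 m, x ≤ ∑ i ∈ Finset.range n, Y i ω}
      ≤ ENNReal.ofReal (Real.exp (-2 * x ^ 2 / m)) := by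
  classical
  have hmR : (0:ℝ) < (m:ℝ) := by exact_mod_cast hm
  set S : ℕ → Ω → ℝ := fun n ω => ∑ i ∈ Finset.range n, Y i ω with hSdef
  have hSmeas : ∀ n, Measurable (S n) := fun n =>
    Finset.measurable_sum _ fun i _ => hYmeas i
  set t : ℝ := 4 * x / m with htdef
  have ht : 0 < t := by positivity
  set A : ℕ → Set Ω := fun n => {ω | x ≤ S n ω ∧ ∀ k, k < n → S k ω < x} with hAdef
  have hAmeas : ∀ n, MeasurableSet (A n) := by
    intro n
    have : A n = {ω | x ≤ S n ω} ∩ ⋂ k ∈ Set.Iio n, {ω | S k ω < x} := by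
      ext ω; simp [hAdef, Set.mem_iInter]
    rw [this]
    exact (measurableSet_le measurable_const (hSmeas n)).inter
      (MeasurableSet.biInter (Set.to_countable _) fun k _ =>
        measurableSet_lt (hSmeas k) measurable_const)
  have hTeq : {ω | ∃ n ∈ Finset.Icc 1 m, x ≤ ∑ i ∈ Finset.range n, Y i ω}
      = ⋃ n ∈ Finset.Icc 1 m, A n := by
    ext ω
    simp only [Set.mem_setOf_eq, Set.mem_iUnion, exists_prop]
    constructor
    · rintro ⟨n, hn, hxn⟩
      rw [Finset.mem_Icc] at hn
      have hxn' : x ≤ S n ω := hxn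
      have h' : ∃ k, x ≤ S k ω := ⟨n, hxn'⟩
      refine ⟨Nat.find h', ?_, Nat.find_spec h', fun k hk => not_le.1 (Nat.find_min h' hk)⟩
      rw [Finset.mem_Icc]
      refine ⟨?_, le_trans (Nat.find_min' h' hxn') hn.2⟩
      rcases Nat.eq_zero_or_pos (Nat.find h') with h0 | h0
      · exfalso
        have hspec := Nat.find_spec h'
        rw [h0] at hspec
        simp only [hSdef, Finset.range_zero, Finset.sum_empty] at hspec
        linarith
      · exact h0
    · rintro ⟨n, hn, h1, _⟩
      exact ⟨n, hn, h1⟩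
  have hkey2 : ∀ a b : ℕ, a < b → Disjoint (A a) (A b) := by
    intro a b hab
    rw [Set.disjoint_left]
    rintro ω ⟨h1, _⟩ ⟨_, h2⟩
    exact absurd h1 (not_le.2 (h2 a hab))
  have hpair : (↑(Finset.Icc 1 m) : Set ℕ).PairwiseDisjoint A := by
    intro a _ b _ hab
    rcases lt_or_gt_of_ne hab with h | h
    · exact hkey2 a b h
    · exact (hkey2 b a h).symm
  -- boundedness and integrability facts
  have hae : ∀ᵐ ω ∂P, ∀ i, i < m → Y i ω ∈ Set.Icc (c i) (c i + 1) := by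
    rw [MeasureTheory.ae_all_iff]
    intro i
    by_cases h : i < m
    · filter_upwards [hbdd i h] with ω hω using fun _ => hω
    · filter_upwards with ω using fun hi => absurd hi h
  have habs : ∀ (y ci : ℝ), y ∈ Set.Icc ci (ci + 1) → |y| ≤ |ci| + 1 := by
    intro y ci h
    rw [abs_le]
    constructor
    · have := neg_abs_le ci; linarith [h.1]
    · have := le_abs_self ci; linarith [h.2]
  set B : ℝ := ∑ i ∈ Finset.range m, (|c i| + 1) with hBdef
  have haeS : ∀ᵐ ω ∂P, ∀ k, k ≤ m → |S k ω| ≤ B := by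
    filter_upwards [hae] with ω h
    intro k hk
    calc |S k ω| ≤ ∑ i ∈ Finset.range k, |Y i ω| := Finset.abs_sum_le_sum_abs _ _
      _ ≤ ∑ i ∈ Finset.range k, (|c i| + 1) := by
          refine Finset.sum_le_sum fun i hi => ?_
          exact habs _ _ (h i (lt_of_lt_of_le (Finset.mem_range.1 hi) hk))
      _ ≤ B := Finset.sum_le_sum_of_subset_of_nonneg
          (Finset.range_subset_range.2 hk) (fun i _ _ => by positivity)
  set K : ℝ := Real.exp (|t| * B) with hKdef
  have hexpS_bound : ∀ k, k ≤ m → ∀ᵐ ω ∂P, |Real.exp (t * S k ω)| ≤ K := by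
    intro k hk
    filter_upwards [haeS] with ω h
    rw [abs_of_pos (Real.exp_pos _), hKdef]
    refine Real.exp_le_exp.2 ?_
    calc t * S k ω ≤ |t * S k ω| := le_abs_self _
      _ = |t| * |S k ω| := abs_mul _ _
      _ ≤ |t| * B := mul_le_mul_of_nonneg_left (h k hk) (abs_nonneg t)
  have hexpSint : ∀ k, k ≤ m → Integrable (fun ω => Real.exp (t * S k ω)) P := fun k hk =>
    integrable_of_ae_bound ((hSmeas k).const_mul t).exp (hexpS_bound k hk)
  have hYint : ∀ i, i < m → Integrable (Y i) P := fun i hi =>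
    integrable_of_ae_bound (hYmeas i)
      (by filter_upwards [hbdd i hi] with ω h using habs _ _ h)
  have hexpYint : ∀ i, i < m → Integrable (fun ω => Real.exp (t * Y i ω)) P := by
    intro i hi
    refine integrable_of_ae_bound (C := Real.exp (|t| * (|c i| + 1)))
      ((hYmeas i).const_mul t).exp ?_
    filter_upwards [hbdd i hi] with ω h
    rw [abs_of_pos (Real.exp_pos _)]
    refine Real.exp_le_exp.2 ?_
    calc t * Y i ω ≤ |t * Y i ω| := le_abs_self _
      _ = |t| * |Y i ω| := abs_mul _ _
      _ ≤ |t| * (|c i| + 1) := mul_le_mul_of_nonneg_left (habs _ _ h) (abs_nonneg t)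
  have hexpYone : ∀ i, i < m → 1 ≤ ∫ ω, Real.exp (t * Y i ω) ∂P := by
    intro i hi
    have h1 : (1:ℝ) = ∫ ω, (1 + t * Y i ω) ∂P := by
      rw [integral_add (integrable_const 1) ((hYint i hi).const_mul t), integral_const,
        integral_const_mul, hmean i hi]
      simp
    rw [h1]
    refine integral_mono ((integrable_const 1).add ((hYint i hi).const_mul t))
      (hexpYint i hi) fun ω => ?_
    have := Real.add_one_le_exp (t * Y i ω)
    simp only [Pi.add_apply]
    linarith
  -- the key one-step inequality
  have hstep : ∀ n j, n ≤ j → j < m →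
      ∫ ω, Set.indicator (A n) (fun ω' => Real.exp (t * S j ω')) ω ∂P ≤
      ∫ ω, Set.indicator (A n) (fun ω' => Real.exp (t * S (j + 1) ω')) ω ∂P := by
    intro n j hnj hjm
    set S' : Finset (Fin m) := Finset.univ.filter (fun i => (i : ℕ) < j) with hS'def
    set jm : Fin m := ⟨j, hjm⟩ with hjmdef
    have hdisjST : Disjoint S' {jm} := by
      rw [Finset.disjoint_right]
      intro a ha
      rw [Finset.mem_singleton] at ha
      subst ha
      simp [hS'def, hjmdef]
    set ev : (↥S' → ℝ) → ℕ → ℝ := fun v i =>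
      if h : i < j then v ⟨⟨i, h.trans hjm⟩, Finset.mem_filter.2 ⟨Finset.mem_univ _, h⟩⟩ else 0
      with hevdef
    set sv : (↥S' → ℝ) → ℕ → ℝ := fun v k => ∑ i ∈ Finset.range k, ev v i with hsvdef
    have hev : ∀ (ω : Ω) (i : ℕ), i < j →
        ev (fun i : ↥S' => Y ((i : Fin m) : ℕ) ω) i = Y i ω := by
      intro ω i h
      simp [hevdef, h]
    have hsv : ∀ (ω : Ω) (k : ℕ), k ≤ j →
        sv (fun i : ↥S' => Y ((i : Fin m) : ℕ) ω) k = S k ω := by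
      intro ω k hk
      simp only [hsvdef, hSdef]
      refine Finset.sum_congr rfl fun i hi => ?_
      exact hev ω i (lt_of_lt_of_le (Finset.mem_range.1 hi) hk)
    have hevmeas : ∀ i, Measurable fun v : ↥S' → ℝ => ev v i := by
      intro i
      by_cases h : i < j
      · simp only [hevdef, dif_pos h]
        exact measurable_pi_apply _
      · simp only [hevdef, dif_neg h]
        exact measurable_const
    have hsvmeas : ∀ k, Measurable fun v : ↥S' → ℝ => sv v k := by
      intro k
      simp only [hsvdef]
      exact Finset.measurable_sum _ fun i _ => hevmeas i
    set Cset : Set (↥S' → ℝ) := {v | x ≤ sv v n ∧ ∀ k, k < n → sv v k < x} with hCdef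
    have hCmeas : MeasurableSet Cset := by
      have : Cset = {v | x ≤ sv v n} ∩ ⋂ k ∈ Set.Iio n, {v | sv v k < x} := by
        ext v; simp [hCdef, Set.mem_iInter]
      rw [this]
      exact (measurableSet_le measurable_const (hsvmeas n)).inter
        (MeasurableSet.biInter (Set.to_countable _) fun k _ =>
          measurableSet_lt (hsvmeas k) measurable_const)
    set φ : (↥S' → ℝ) → ℝ :=
      fun v => Set.indicator Cset (fun v' => Real.exp (t * sv v' j)) v with hφdef
    have hφmeas : Measurable φ := (((hsvmeas j).const_mul t).exp).indicator hCmeas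
    set ψ : (↥({jm} : Finset (Fin m)) → ℝ) → ℝ :=
      fun w => Real.exp (t * w ⟨jm, Finset.mem_singleton_self jm⟩) with hψdef
    have hψmeas : Measurable ψ := by rw [hψdef]; fun_prop
    have hIF := (hindep.indepFun_finset S' {jm} hdisjST fun i => hYmeas _).comp hφmeas hψmeas
    set Fn : Ω → ℝ := fun ω => φ (fun i : ↥S' => Y ((i : Fin m) : ℕ) ω) with hFndef
    set Gn : Ω → ℝ := fun ω => Real.exp (t * Y j ω) with hGndef
    have hIF' : IndepFun Fn Gn P := hIF
    have hFn_eq : ∀ ω, Fn ω = Set.indicator (A n) (fun ω' => Real.exp (t * S j ω')) ω := by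
      intro ω
      have hmem : ((fun i : ↥S' => Y ((i : Fin m) : ℕ) ω) ∈ Cset) ↔ ω ∈ A n := by
        simp only [hCdef, Set.mem_setOf_eq, hAdef]
        rw [hsv ω n hnj]
        constructor
        · rintro ⟨h1, h2⟩
          refine ⟨h1, fun k hk => ?_⟩
          rw [← hsv ω k (le_of_lt (lt_of_lt_of_le hk hnj))]
          exact h2 k hk
        · rintro ⟨h1, h2⟩
          refine ⟨h1, fun k hk => ?_⟩
          rw [hsv ω k (le_of_lt (lt_of_lt_of_le hk hnj))]
          exact h2 k hk
      by_cases h : ω ∈ A n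
      · rw [Set.indicator_of_mem h]
        simp only [hFndef, hφdef]
        rw [Set.indicator_of_mem (hmem.2 h), hsv ω j le_rfl]
      · rw [Set.indicator_of_notMem h]
        simp only [hFndef, hφdef]
        rw [Set.indicator_of_notMem (fun hc => h (hmem.1 hc))]
    have hFnint : Integrable Fn P := by
      rw [show Fn = Set.indicator (A n) (fun ω' => Real.exp (t * S j ω')) from funext hFn_eq]
      exact (hexpSint j (le_of_lt hjm)).indicator (hAmeas n)
    have hGnint : Integrable Gn P := hexpYint j hjm
    have hmul := IndepFun.integral_mul_eq_mul_integral hIF' hFnint.aestronglyMeasurable hGnint.aestronglyMeasurable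
    have hprod : ∀ ω, Fn ω * Gn ω =
        Set.indicator (A n) (fun ω' => Real.exp (t * S (j + 1) ω')) ω := by
      intro ω
      rw [hFn_eq ω]
      by_cases h : ω ∈ A n
      · rw [Set.indicator_of_mem h, Set.indicator_of_mem h]
        simp only [hGndef]
        rw [← Real.exp_add]
        congr 1
        simp only [hSdef]
        rw [Finset.sum_range_succ]
        ring
      · rw [Set.indicator_of_notMem h, Set.indicator_of_notMem h, zero_mul]
    have hFn0 : 0 ≤ ∫ ω, Fn ω ∂P := by
      refine integral_nonneg fun ω => ?_
      rw [hFn_eq ω]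
      exact Set.indicator_nonneg (fun ω' _ => (Real.exp_pos _).le) ω
    calc ∫ ω, Set.indicator (A n) (fun ω' => Real.exp (t * S j ω')) ω ∂P
        = ∫ ω, Fn ω ∂P := by
          rw [show Fn = Set.indicator (A n) (fun ω' => Real.exp (t * S j ω'))
            from funext hFn_eq]
      _ ≤ (∫ ω, Fn ω ∂P) * ∫ ω, Gn ω ∂P :=
          le_mul_of_one_le_right hFn0 (hexpYone j hjm)
      _ = ∫ ω, Fn ω * Gn ω ∂P := by
          rw [← hmul]
          refine integral_congr_ae (Filter.Eventually.of_forall fun ω => ?_)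
          simp [Pi.mul_apply]
      _ = ∫ ω, Set.indicator (A n) (fun ω' => Real.exp (t * S (j + 1) ω')) ω ∂P :=
          integral_congr_ae (Filter.Eventually.of_forall hprod)
  -- chain the steps
  have hchain : ∀ n, ∀ j, n ≤ j → j ≤ m →
      ∫ ω, Set.indicator (A n) (fun ω' => Real.exp (t * S n ω')) ω ∂P ≤
      ∫ ω, Set.indicator (A n) (fun ω' => Real.exp (t * S j ω')) ω ∂P := by
    intro n j hnj
    induction j, hnj using Nat.le_induction with
    | base => intro _; exact le_rfl
    | succ j hnj ih =>
        intro hjm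
        exact le_trans (ih (Nat.le_of_succ_le hjm)) (hstep n j hnj (Nat.lt_of_succ_le hjm))
  -- per-n bound
  have h1n : ∀ n, 1 ≤ n → n ≤ m →
      Real.exp (t * x) * (P (A n)).toReal ≤ ∫ ω in A n, Real.exp (t * S m ω) ∂P := by
    intro n h1 h2
    have e1 : Real.exp (t * x) * (P (A n)).toReal =
        ∫ ω, Set.indicator (A n) (fun _ => Real.exp (t * x)) ω ∂P := by
      rw [integral_indicator_const _ (hAmeas n)]
      simp [mul_comm]
      rfl
    have e2 : ∫ ω, Set.indicator (A n) (fun _ => Real.exp (t * x)) ω ∂P ≤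
        ∫ ω, Set.indicator (A n) (fun ω' => Real.exp (t * S n ω')) ω ∂P := by
      refine integral_mono ((integrable_const _).indicator (hAmeas n))
        ((hexpSint n h2).indicator (hAmeas n)) fun ω => ?_
      by_cases h : ω ∈ A n
      · rw [Set.indicator_of_mem h, Set.indicator_of_mem h]
        exact Real.exp_le_exp.2 (mul_le_mul_of_nonneg_left h.1 ht.le)
      · rw [Set.indicator_of_notMem h, Set.indicator_of_notMem h]
    have e3 := hchain n m h2 le_rfl
    rw [e1]
    refine le_trans e2 (le_trans e3 (le_of_eq ?_))
    rw [integral_indicator (hAmeas n)]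
  -- sum over the disjoint pieces
  have hsum_le : ∑ n ∈ Finset.Icc 1 m, ∫ ω in A n, Real.exp (t * S m ω) ∂P ≤
      ∫ ω, Real.exp (t * S m ω) ∂P := by
    rw [← integral_biUnion_finset (Finset.Icc 1 m) (fun n _ => hAmeas n) hpair
      (fun n _ => (hexpSint m le_rfl).integrableOn)]
    refine setIntegral_le_integral (hexpSint m le_rfl) ?_
    filter_upwards with ω using (Real.exp_pos _).le
  -- mgf bound
  have hmgf : ∫ ω, Real.exp (t * S m ω) ∂P ≤ Real.exp ((m : ℝ) * (t ^ 2 / 8)) := by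
    have hfun : S m = ∑ i : Fin m, (fun i : Fin m => Y (i : ℕ)) i := by
      funext ω
      rw [Finset.sum_apply]
      exact (Fin.sum_univ_eq_sum_range (fun i => Y i ω) m).symm
    have hmgfsum := hindep.mgf_sum (fun i => hYmeas _) Finset.univ (t := t)
    have heq : ∫ ω, Real.exp (t * S m ω) ∂P = mgf (S m) P t := rfl
    rw [heq, hfun, hmgfsum]
    calc ∏ i : Fin m, mgf (Y (i : ℕ)) P t ≤ ∏ _i : Fin m, Real.exp (t ^ 2 / 8) := by
          refine Finset.prod_le_prod (fun i _ => mgf_nonneg) fun i _ => ?_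
          exact mgf_step_bound P (Y (i : ℕ)) (hYmeas _) (c (i : ℕ)) (hbdd _ i.2) (hmean _ i.2) t
      _ = Real.exp ((m : ℝ) * (t ^ 2 / 8)) := by
          rw [Finset.prod_const, Finset.card_univ, Fintype.card_fin, ← Real.exp_nat_mul]
  -- arithmetic conclusion in ℝ
  have hfinal : ∑ n ∈ Finset.Icc 1 m, (P (A n)).toReal ≤ Real.exp (-2 * x ^ 2 / m) := by
    have h1 : Real.exp (t * x) * ∑ n ∈ Finset.Icc 1 m, (P (A n)).toReal ≤
        Real.exp ((m : ℝ) * (t ^ 2 / 8)) := by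
      rw [Finset.mul_sum]
      refine le_trans (Finset.sum_le_sum fun n hn => ?_) (le_trans hsum_le hmgf)
      rw [Finset.mem_Icc] at hn
      exact h1n n hn.1 hn.2
    have hexppos := Real.exp_pos (t * x)
    have h2 : ∑ n ∈ Finset.Icc 1 m, (P (A n)).toReal ≤
        Real.exp ((m : ℝ) * (t ^ 2 / 8)) / Real.exp (t * x) := by
      rw [le_div_iff₀ hexppos]
      linarith [h1]
    refine le_trans h2 (le_of_eq ?_)
    rw [← Real.exp_sub]
    congr 1
    rw [htdef]
    field_simp
    ring
  -- conclude in ℝ≥0∞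
  rw [hTeq, measure_biUnion_finset hpair fun n _ => hAmeas n]
  have : ∑ n ∈ Finset.Icc 1 m, P (A n) =
      ENNReal.ofReal (∑ n ∈ Finset.Icc 1 m, (P (A n)).toReal) := by
    rw [ENNReal.ofReal_sum_of_nonneg fun n _ => ENNReal.toReal_nonneg]
    exact Finset.sum_congr rfl fun n _ => (ENNReal.ofReal_toReal (measure_ne_top P _)).symm
  rw [this]
  exact ENNReal.ofReal_le_ofReal hfinal

end Aux

/-- Maximal Hoeffding-type inequality for partial sums of independent `[0,1]`-valued
random variables with common mean `μ`. -/
theorem maximal_hoeffding_bound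
    {Ω : Type*} [MeasurableSpace Ω] (P : Measure Ω) [IsProbabilityMeasure P]
    (m : ℕ) (hm : 0 < m)
    (X : ℕ → Ω → ℝ) (hXmeas : ∀ i, Measurable (X i))
    (hindep : iIndepFun (fun i : Fin m => X ((i : ℕ) + 1)) P)
    (hbdd : ∀ i ∈ Finset.Icc 1 m, ∀ᵐ ω ∂P, X i ω ∈ Set.Icc (0 : ℝ) 1)
    (μ : ℝ) (hmean : ∀ i ∈ Finset.Icc 1 m, ∫ ω, X i ω ∂P = μ)
    (x : ℝ) (hx : 0 < x) :
    P {ω | ∃ n ∈ Finset.Icc 1 m, x ≤ ∑ i ∈ Finset.Icc 1 n, (μ - X i ω)}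
        ≤ ENNReal.ofReal (Real.exp (-2 * x ^ 2 / m)) ∧
    P {ω | ∃ n ∈ Finset.Icc 1 m, x ≤ ∑ i ∈ Finset.Icc 1 n, (X i ω - μ)}
        ≤ ENNReal.ofReal (Real.exp (-2 * x ^ 2 / m)) := by
  have hmem : ∀ i, i < m → i + 1 ∈ Finset.Icc 1 m := by
    intro i hi
    rw [Finset.mem_Icc]
    omega
  have hXint : ∀ i ∈ Finset.Icc 1 m, Integrable (X i) P := by
    intro i hi
    refine integrable_of_ae_bound (C := 1) (hXmeas i) ?_
    filter_upwards [hbdd i hi] with ω h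
    rw [abs_le]
    exact ⟨by linarith [h.1], h.2⟩
  have h1mem : 1 ∈ Finset.Icc 1 m := by rw [Finset.mem_Icc]; omega
  have hμ0 : 0 ≤ μ := by
    rw [← hmean 1 h1mem]
    refine integral_nonneg_of_ae ?_
    filter_upwards [hbdd 1 h1mem] with ω h
    simpa using h.1
  have hμ1 : μ ≤ 1 := by
    rw [← hmean 1 h1mem]
    calc ∫ ω, X 1 ω ∂P ≤ ∫ _ω, (1 : ℝ) ∂P := by
          refine integral_mono_ae (hXint 1 h1mem) (integrable_const 1) ?_
          filter_upwards [hbdd 1 h1mem] with ω h using h.2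
      _ = 1 := by simp
  have hIcc_range : ∀ (f : ℕ → ℝ) (n : ℕ),
      ∑ i ∈ Finset.Icc 1 n, f i = ∑ j ∈ Finset.range n, f (j + 1) := by
    intro f n
    induction n with
    | zero => simp
    | succ n ih =>
        rw [Finset.sum_Icc_succ_top (by omega : 1 ≤ n + 1), ih, Finset.sum_range_succ]
  constructor
  · -- part 1 : μ - X
    have key := maximal_key P m hm (fun i ω => μ - X (i + 1) ω)
      (fun i => measurable_const.sub (hXmeas (i + 1)))
      (hindep.comp (fun _ => fun y => μ - y) (fun _ => measurable_const.sub measurable_id))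
      (fun _ => μ - 1)
      (by
        intro i hi
        filter_upwards [hbdd (i + 1) (hmem i hi)] with ω h
        simp only [Set.mem_Icc] at h ⊢
        constructor <;> [linarith [h.2]; linarith [h.1]])
      (by
        intro i hi
        rw [integral_sub (integrable_const μ) (hXint (i + 1) (hmem i hi)),
          hmean (i + 1) (hmem i hi), integral_const]
        simp)
      x hx
    have hset : {ω | ∃ n ∈ Finset.Icc 1 m, x ≤ ∑ i ∈ Finset.Icc 1 n, (μ - X i ω)}
        = {ω | ∃ n ∈ Finset.Icc 1 m, x ≤ ∑ i ∈ Finset.range n, (μ - X (i + 1) ω)} := by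
      ext ω
      simp only [Set.mem_setOf_eq]
      constructor
      · rintro ⟨n, hn, hxn⟩
        exact ⟨n, hn, by rwa [← hIcc_range (fun i => μ - X i ω) n]⟩
      · rintro ⟨n, hn, hxn⟩
        exact ⟨n, hn, by rwa [hIcc_range (fun i => μ - X i ω) n]⟩
    rw [hset]
    exact key
  · -- part 2 : X - μ
    have key := maximal_key P m hm (fun i ω => X (i + 1) ω - μ)
      (fun i => (hXmeas (i + 1)).sub measurable_const)
      (hindep.comp (fun _ => fun y => y - μ) (fun _ => measurable_id.sub measurable_const))
      (fun _ => -μ)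
      (by
        intro i hi
        filter_upwards [hbdd (i + 1) (hmem i hi)] with ω h
        simp only [Set.mem_Icc] at h ⊢
        constructor <;> [linarith [h.1]; linarith [h.2]])
      (by
        intro i hi
        rw [integral_sub (hXint (i + 1) (hmem i hi)) (integrable_const μ),
          hmean (i + 1) (hmem i hi), integral_const]
        simp)
      x hx
    have hset : {ω | ∃ n ∈ Finset.Icc 1 m, x ≤ ∑ i ∈ Finset.Icc 1 n, (X i ω - μ)}
        = {ω | ∃ n ∈ Finset.Icc 1 m, x ≤ ∑ i ∈ Finset.range n, (X (i + 1) ω - μ)} := by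
      ext ω
      simp only [Set.mem_setOf_eq]
      constructor
      · rintro ⟨n, hn, hxn⟩
        exact ⟨n, hn, by rwa [← hIcc_range (fun i => X i ω - μ) n]⟩
      · rintro ⟨n, hn, hxn⟩
        exact ⟨n, hn, by rwa [hIcc_range (fun i => X i ω - μ) n]⟩
    rw [hset]
    exact key
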